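/- Let d = p^α q^β be a product of two prime powers (p, q distinct primes). Then among any 6 consecutive denominators q_i, q_{i+1}, ..., q_{i+5} of consecutive elements of the Farey sequence F_Q, at least one is coprime to d. -/

import Mathlib

open scoped BigOperators

/-- The Farey set of order `Q`: rationals in `(0,1]` with denominator at most `Q`. -/
def fareySet (Q : ℕ) : Set ℚ := {x | 0 < x ∧ x ≤ 1 ∧ x.den ≤ Q}

/-- `x < y` are consecutive elements of the Farey sequence of order `Q`. -/
def FareyConsecutive (Q : ℕ) (x y : ℚ) : Prop :=
  x ∈ fareySet Q ∧ y ∈ fareySet Q ∧ x < y ∧ ∀ z ∈ fareySet Q, ¬(x < z ∧ z < y)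

/-- If `d = p^α q^β` with `p ≠ q` primes, then among any six consecutive
elements of `F_Q`, at least one has denominator coprime to `d`. -/
lemma farey_pair {Q : ℕ} {x y : ℚ} (h : FareyConsecutive Q x y) :
    (x.den : ℤ) * y.num - (y.den : ℤ) * x.num = 1 ∧ Q < x.den + y.den := by
  obtain ⟨⟨hx0, hx1, hxd⟩, ⟨hy0, hy1, hyd⟩, hxy, hbtw⟩ := h
  have ha : 0 < x.num := Rat.num_pos.mpr hx0
  have hb : 0 < (x.den : ℤ) := Int.natCast_pos.mpr x.pos
  have hab : x.num < (x.den : ℤ) :=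
    Rat.num_lt_denom_iff.mpr (lt_of_lt_of_le hxy hy1)
  have hbQ : (x.den : ℤ) ≤ (Q : ℤ) := by exact_mod_cast hxd
  have hcop : IsCoprime x.num ((x.den : ℤ)) := by
    rw [Int.isCoprime_iff_gcd_eq_one]
    simpa [Int.gcd, Int.natAbs_natCast] using x.reduced
  obtain ⟨u, v, huv⟩ := hcop
  set a := x.num
  set b : ℤ := (x.den : ℤ) with hbdef
  set t : ℤ := Q - (Q + u) % b with htdef
  have hmod_nonneg : 0 ≤ (Q + u) % b := Int.emod_nonneg _ (ne_of_gt hb)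
  have hmod_lt : (Q + u) % b < b := Int.emod_lt_of_pos _ hb
  have htQ : t ≤ (Q : ℤ) := by omega
  have htQb : (Q : ℤ) - b < t := by omega
  have ht : 0 < t := by omega
  have hdvd : b ∣ a * t + 1 := by
    have h1 : (Q + u) % b = (Q + u) - b * ((Q + u) / b) := Int.emod_def _ _
    have h2 : t = -u + b * ((Q + u) / b) := by rw [htdef, h1]; ring
    exact ⟨a * ((Q + u) / b) + v, by linear_combination a * h2 - huv⟩
  obtain ⟨c, hc⟩ := hdvd
  have hc0 : 0 < c := by nlinarith [hc]
  have hct : c ≤ t := by nlinarith [hc]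
  have htnat : ((t.toNat : ℤ)) = t := Int.toNat_of_nonneg ht.le
  have hcopct : c.natAbs.Coprime t.toNat := by
    have hic : IsCoprime c t := ⟨b, -a, by linear_combination -hc⟩
    rw [Int.isCoprime_iff_gcd_eq_one] at hic
    have hnat : t.natAbs = t.toNat := by omega
    simpa [Int.gcd, hnat] using hic
  set z : ℚ := ⟨c, t.toNat, by omega, hcopct⟩ with hz_def
  have hznum : z.num = c := rfl
  have hzden : (z.den : ℤ) = t := by rw [show z.den = t.toNat from rfl]; exact htnat
  have hxz : x < z := by
    rw [Rat.lt_iff, hznum, hzden]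
    show a * t < c * b
    nlinarith
  have hz_pos : 0 < z := Rat.num_pos.mp (by rw [hznum]; exact hc0)
  have hz_le_one : z ≤ 1 := by
    rw [Rat.le_iff, hznum]
    have : ((1:ℚ)).num = 1 := rfl
    have h1d : (((1:ℚ)).den : ℤ) = 1 := rfl
    rw [this, h1d, hzden]
    simpa using hct
  have hz_mem : z ∈ fareySet Q := ⟨hz_pos, hz_le_one, by
    show t.toNat ≤ Q; omega⟩
  have hyz : y ≤ z := not_lt.mp (fun hlt => hbtw z hz_mem ⟨hxz, hlt⟩)
  have hzy : z ≤ y := by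
    by_contra hzy
    push_neg at hzy
    have h1 : a * (y.den:ℤ) < y.num * b := (Rat.lt_iff _ _).mp hxy
    have h2 : y.num * t < c * (y.den:ℤ) := by
      have := (Rat.lt_iff _ _).mp hzy
      rwa [hznum, hzden] at this
    have hD1 : 1 ≤ b * y.num - (y.den:ℤ) * a := by linarith [Int.add_one_le_iff.mpr (show a * (y.den:ℤ) < y.num * b from h1)]
    have hD2 : 1 ≤ c * (y.den:ℤ) - t * y.num := by linarith
    have key : ((y.den:ℤ)) = t * (b * y.num - (y.den:ℤ) * a) + b * (c * (y.den:ℤ) - t * y.num) := by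
      linear_combination ((y.den : ℤ)) * hc
    have hgQ : ((y.den:ℤ)) ≤ (Q:ℤ) := by exact_mod_cast hyd
    nlinarith [mul_le_mul_of_nonneg_left hD1 ht.le, mul_le_mul_of_nonneg_left hD2 hb.le]
  have hy_eq : y = z := le_antisymm hyz hzy
  constructor
  · rw [hy_eq, hznum, hzden]; linarith [hc]
  · have h5 : (Q:ℤ) < b + (y.den:ℤ) := by rw [hy_eq, hzden]; omega
    rw [hbdef] at h5; exact_mod_cast h5

lemma dvd_or_dvd_of_not_coprime {p q α β n : ℕ} (hp : p.Prime) (hq : q.Prime)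
    (h : ¬ n.Coprime (p ^ α * q ^ β)) : p ∣ n ∨ q ∣ n := by
  by_contra hn
  push_neg at hn
  exact h ((((hp.coprime_iff_not_dvd.mpr hn.1).symm.pow_right α)).mul_right
    (((hq.coprime_iff_not_dvd.mpr hn.2).symm.pow_right β)))

lemma not_dvd_of_cop {r m n : ℕ} (hr : r.Prime) (cop : Nat.Coprime m n) (hm : r ∣ m) :
    ¬ r ∣ n := by
  intro hn
  have := Nat.dvd_gcd hm hn
  rw [Nat.Coprime.gcd_eq_one cop] at this
  exact hr.ne_one (Nat.dvd_one.mp this)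

lemma kfact {r : ℕ} (hr : r.Prime) {b0 b1 b2 : ℕ} {n0 n1 n2 : ℤ}
    (U0 : (b0:ℤ) * n1 - b1 * n0 = 1) (U1 : (b1:ℤ) * n2 - b2 * n1 = 1)
    (hb0 : 0 < b0) (hb1 : 0 < b1) (hb2 : 0 < b2)
    (h0 : r ∣ b0) (h2 : r ∣ b2) (hnd : ¬ r ∣ b1) :
    r * b1 ≤ b0 + b2 := by
  set K : ℤ := (b0:ℤ) * n2 - b2 * n0 with hKdef
  have hK : (b0:ℤ) + b2 = K * b1 := by linear_combination (-(b0:ℤ)) * U1 - (b2:ℤ) * U0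
  have hb1' : (0:ℤ) < b1 := by exact_mod_cast hb1
  have hKpos : 0 < K := by
    by_contra hh
    push_neg at hh
    nlinarith [hK, (show (0:ℤ) < b0 by exact_mod_cast hb0), (show (0:ℤ) < b2 by exact_mod_cast hb2)]
  have hrp : Prime (r:ℤ) := Nat.prime_iff_prime_int.mp hr
  have hdvd : (r:ℤ) ∣ K * b1 := by
    rw [← hK]
    exact dvd_add (Int.natCast_dvd_natCast.mpr h0) (Int.natCast_dvd_natCast.mpr h2)
  have hrK : (r:ℤ) ∣ K :=
    (hrp.dvd_mul.mp hdvd).resolve_right (fun hh => hnd (Int.natCast_dvd_natCast.mp hh))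
  have hle : (r:ℤ) ≤ K := Int.le_of_dvd hKpos hrK
  have : (r:ℤ) * b1 ≤ (b0:ℤ) + b2 := by
    rw [hK]; exact mul_le_mul_of_nonneg_right hle hb1'.le
  exact_mod_cast this

lemma farey_six_aux (Q r s : ℕ) (b0 b1 b2 b3 b4 b5 : ℕ) (n0 n1 n2 n3 n4 n5 : ℤ)
    (hr : r.Prime) (hs : s.Prime) (hrs : r ≠ s)
    (U0 : (b0:ℤ)*n1 - b1*n0 = 1) (U1 : (b1:ℤ)*n2 - b2*n1 = 1)
    (U2 : (b2:ℤ)*n3 - b3*n2 = 1) (U3 : (b3:ℤ)*n4 - b4*n3 = 1) (U4 : (b4:ℤ)*n5 - b5*n4 = 1)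
    (S0 : Q < b0+b1) (S1 : Q < b1+b2) (S2 : Q < b2+b3) (S3 : Q < b3+b4) (S4 : Q < b4+b5)
    (L0 : b0 ≤ Q) (L1 : b1 ≤ Q) (L2 : b2 ≤ Q) (L3 : b3 ≤ Q) (L4 : b4 ≤ Q) (L5 : b5 ≤ Q)
    (P0 : 0 < b0) (P1 : 0 < b1) (P2 : 0 < b2) (P3 : 0 < b3) (P4 : 0 < b4) (P5 : 0 < b5)
    (hd0 : r ∣ b0) (D1 : r ∣ b1 ∨ s ∣ b1) (D2 : r ∣ b2 ∨ s ∣ b2)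
    (D3 : r ∣ b3 ∨ s ∣ b3) (D4 : r ∣ b4 ∨ s ∣ b4) (D5 : r ∣ b5 ∨ s ∣ b5) : False := by
  have cop01 : Nat.Coprime b0 b1 := Nat.isCoprime_iff_coprime.mp ⟨n1, -n0, by linear_combination U0⟩
  have cop12 : Nat.Coprime b1 b2 := Nat.isCoprime_iff_coprime.mp ⟨n2, -n1, by linear_combination U1⟩
  have cop23 : Nat.Coprime b2 b3 := Nat.isCoprime_iff_coprime.mp ⟨n3, -n2, by linear_combination U2⟩
  have cop34 : Nat.Coprime b3 b4 := Nat.isCoprime_iff_coprime.mp ⟨n4, -n3, by linear_combination U3⟩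
  have cop45 : Nat.Coprime b4 b5 := Nat.isCoprime_iff_coprime.mp ⟨n5, -n4, by linear_combination U4⟩
  have hnr1 : ¬ r ∣ b1 := not_dvd_of_cop hr cop01 hd0
  have hs1 : s ∣ b1 := D1.resolve_left hnr1
  have hns2 : ¬ s ∣ b2 := not_dvd_of_cop hs cop12 hs1
  have hr2 : r ∣ b2 := D2.resolve_right hns2
  have hnr3 : ¬ r ∣ b3 := not_dvd_of_cop hr cop23 hr2
  have hs3 : s ∣ b3 := D3.resolve_left hnr3
  have hns4 : ¬ s ∣ b4 := not_dvd_of_cop hs cop34 hs3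
  have hr4 : r ∣ b4 := D4.resolve_right hns4
  have hnr5 : ¬ r ∣ b5 := not_dvd_of_cop hr cop45 hr4
  have hs5 : s ∣ b5 := D5.resolve_left hnr5
  have A1 : r * b1 ≤ b0 + b2 := kfact hr U0 U1 P0 P1 P2 hd0 hr2 hnr1
  have A2 : s * b2 ≤ b1 + b3 := kfact hs U1 U2 P1 P2 P3 hs1 hs3 hns2
  have A3 : r * b3 ≤ b2 + b4 := kfact hr U2 U3 P2 P3 P4 hr2 hr4 hnr3
  have A4 : s * b4 ≤ b3 + b5 := kfact hs U3 U4 P3 P4 P5 hs3 hs5 hns4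
  have hr2' : 2 ≤ r := hr.two_le
  have hs2' : 2 ≤ s := hs.two_le
  have h3 : 3 ≤ r ∨ 3 ≤ s := by omega
  rcases h3 with h3 | h3
  · -- pattern (3,2,3,2)
    have c1 : 3 * b1 ≤ b0 + b2 := le_trans (Nat.mul_le_mul_right _ h3) A1
    have c2 : 2 * b2 ≤ b1 + b3 := le_trans (Nat.mul_le_mul_right _ hs2') A2
    have c3 : 3 * b3 ≤ b2 + b4 := le_trans (Nat.mul_le_mul_right _ h3) A3
    have c4 : 2 * b4 ≤ b3 + b5 := le_trans (Nat.mul_le_mul_right _ hs2') A4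
    omega
  · -- pattern (2,3,2,3)
    have c1 : 2 * b1 ≤ b0 + b2 := le_trans (Nat.mul_le_mul_right _ hr2') A1
    have c2 : 3 * b2 ≤ b1 + b3 := le_trans (Nat.mul_le_mul_right _ h3) A2
    have c3 : 2 * b3 ≤ b2 + b4 := le_trans (Nat.mul_le_mul_right _ hr2') A3
    have c4 : 3 * b4 ≤ b3 + b5 := le_trans (Nat.mul_le_mul_right _ h3) A4
    omega

theorem farey_six_consecutive_coprime (Q : ℕ) (p q α β : ℕ)
    (hp : p.Prime) (hq : q.Prime) (hpq : p ≠ q) (hα : 0 < α) (hβ : 0 < β)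
    (f : Fin 6 → ℚ) (hf : ∀ i : Fin 5, FareyConsecutive Q (f i.castSucc) (f i.succ)) :
    ∃ i : Fin 6, Nat.Coprime (f i).den (p ^ α * q ^ β) := by
  by_contra hcon
  push_neg at hcon
  have h0 : FareyConsecutive Q (f 0) (f 1) := hf 0
  have h1 : FareyConsecutive Q (f 1) (f 2) := hf 1
  have h2 : FareyConsecutive Q (f 2) (f 3) := hf 2
  have h3 : FareyConsecutive Q (f 3) (f 4) := hf 3
  have h4 : FareyConsecutive Q (f 4) (f 5) := hf 4
  obtain ⟨U0, S0⟩ := farey_pair h0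
  obtain ⟨U1, S1⟩ := farey_pair h1
  obtain ⟨U2, S2⟩ := farey_pair h2
  obtain ⟨U3, S3⟩ := farey_pair h3
  obtain ⟨U4, S4⟩ := farey_pair h4
  have L0 : (f 0).den ≤ Q := h0.1.2.2
  have L1 : (f 1).den ≤ Q := h1.1.2.2
  have L2 : (f 2).den ≤ Q := h2.1.2.2
  have L3 : (f 3).den ≤ Q := h3.1.2.2
  have L4 : (f 4).den ≤ Q := h4.1.2.2
  have L5 : (f 5).den ≤ Q := h4.2.1.2.2
  have D0 := dvd_or_dvd_of_not_coprime hp hq (hcon 0)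
  have D1 := dvd_or_dvd_of_not_coprime hp hq (hcon 1)
  have D2 := dvd_or_dvd_of_not_coprime hp hq (hcon 2)
  have D3 := dvd_or_dvd_of_not_coprime hp hq (hcon 3)
  have D4 := dvd_or_dvd_of_not_coprime hp hq (hcon 4)
  have D5 := dvd_or_dvd_of_not_coprime hp hq (hcon 5)
  rcases D0 with hd | hd
  · exact farey_six_aux Q p q (f 0).den (f 1).den (f 2).den (f 3).den (f 4).den (f 5).den
      (f 0).num (f 1).num (f 2).num (f 3).num (f 4).num (f 5).num
      hp hq hpq U0 U1 U2 U3 U4 S0 S1 S2 S3 S4 L0 L1 L2 L3 L4 L5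
      (f 0).pos (f 1).pos (f 2).pos (f 3).pos (f 4).pos (f 5).pos
      hd D1 D2 D3 D4 D5
  · exact farey_six_aux Q q p (f 0).den (f 1).den (f 2).den (f 3).den (f 4).den (f 5).den
      (f 0).num (f 1).num (f 2).num (f 3).num (f 4).num (f 5).num
      hq hp (Ne.symm hpq) U0 U1 U2 U3 U4 S0 S1 S2 S3 S4 L0 L1 L2 L3 L4 L5
      (f 0).pos (f 1).pos (f 2).pos (f 3).pos (f 4).pos (f 5).pos
      hd D1.symm D2.symm D3.symm D4.symm D5.symm
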